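/- For every real number r, the double integral ∫_{-π/2}^{π/2} ∫_{0}^{arctanh(tanh(r/2)·cos θ)} cosh(t) dt dθ equals r. -/

import Mathlib

open Real intervalIntegral

/-- The inverse hyperbolic tangent. -/
noncomputable def artanh (x : ℝ) : ℝ := Real.log ((1 + x) / (1 - x)) / 2

lemma sinh_artanh {x : ℝ} (hx : |x| < 1) :
    Real.sinh (_root_.artanh x) = x / Real.sqrt (1 - x ^ 2) := by
  obtain ⟨h1', h2'⟩ := abs_lt.1 hx
  have h1 : 0 < 1 + x := by linarith
  have h2 : 0 < 1 - x := by linarith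
  have hq : 0 < (1 + x) / (1 - x) := div_pos h1 h2
  have hart : _root_.artanh x = Real.log (Real.sqrt ((1 + x) / (1 - x))) := by
    rw [Real.log_sqrt hq.le, _root_.artanh]
  rw [hart, Real.sinh_log (Real.sqrt_pos.2 hq)]
  have ha : Real.sqrt (1 + x) > 0 := Real.sqrt_pos.2 h1
  have hb : Real.sqrt (1 - x) > 0 := Real.sqrt_pos.2 h2
  have hsq : Real.sqrt ((1 + x) / (1 - x)) = Real.sqrt (1 + x) / Real.sqrt (1 - x) :=
    Real.sqrt_div h1.le _
  have hprod : Real.sqrt (1 - x ^ 2) = Real.sqrt (1 + x) * Real.sqrt (1 - x) := by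
    rw [← Real.sqrt_mul h1.le]; ring_nf
  have ha2 : Real.sqrt (1 + x) ^ 2 = 1 + x := Real.sq_sqrt h1.le
  have hb2 : Real.sqrt (1 - x) ^ 2 = 1 - x := Real.sq_sqrt h2.le
  rw [hsq, hprod]
  rw [div_eq_div_iff (by positivity) (by positivity)]
  field_simp
  nlinarith [ha2, hb2, mul_pos ha hb]

theorem inner_cosh (a : ℝ) : (∫ t in (0:ℝ)..a, Real.cosh t) = Real.sinh a := by
  have : (∫ t in (0:ℝ)..a, Real.cosh t) = Real.sinh a - Real.sinh 0 := by
    apply intervalIntegral.integral_eq_sub_of_hasDerivAt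
    · intro t _; exact Real.hasDerivAt_sinh t
    · exact (Real.continuous_cosh).intervalIntegrable _ _
  simpa using this

/-- For every real number `r`, the double integral
`∫_{-π/2}^{π/2} ∫_0^{artanh(tanh(r/2)·cos θ)} cosh t dt dθ` equals `r`. -/
theorem integral_kinematic_measure_segment (r : ℝ) :
    ∫ θ in (-(π / 2))..(π / 2),
      ∫ t in (0 : ℝ)..(_root_.artanh (Real.tanh (r / 2) * Real.cos θ)), Real.cosh t = r := by
  set c := r / 2 with hc
  set s := Real.sinh c with hs
  have hcoshpos : 0 < Real.cosh c := Real.cosh_pos c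
  have htanh_lt : |Real.tanh c| < 1 := by
    rw [Real.tanh_eq_sinh_div_cosh, abs_div, abs_of_pos hcoshpos, div_lt_one hcoshpos]
    nlinarith [Real.cosh_sq c, sq_abs (Real.sinh c), hcoshpos, abs_nonneg (Real.sinh c)]
  have key : ∀ θ : ℝ,
      (∫ t in (0:ℝ)..(_root_.artanh (Real.tanh c * Real.cos θ)), Real.cosh t)
        = s * Real.cos θ / Real.sqrt (1 + (s * Real.sin θ) ^ 2) := by
    intro θ
    have hxabs : |Real.tanh c * Real.cos θ| < 1 := by
      rw [abs_mul]
      calc |Real.tanh c| * |Real.cos θ| ≤ |Real.tanh c| * 1 := by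
            exact mul_le_mul_of_nonneg_left (abs_cos_le_one θ) (abs_nonneg _)
        _ = |Real.tanh c| := mul_one _
        _ < 1 := htanh_lt
    rw [inner_cosh, sinh_artanh hxabs]
    have hA : 0 < 1 + (s * Real.sin θ) ^ 2 := by positivity
    have hden : 1 - (Real.tanh c * Real.cos θ) ^ 2
        = (1 + (s * Real.sin θ) ^ 2) / (Real.cosh c) ^ 2 := by
      rw [Real.tanh_eq_sinh_div_cosh]
      have hsc : Real.sin θ ^ 2 = 1 - Real.cos θ ^ 2 := by
        nlinarith [Real.sin_sq_add_cos_sq θ]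
      have hch : Real.cosh c ^ 2 = Real.sinh c ^ 2 + 1 := Real.cosh_sq c
      field_simp
      nlinarith [hch, hsc]
    rw [hden, Real.sqrt_div hA.le, Real.sqrt_sq hcoshpos.le, Real.tanh_eq_sinh_div_cosh]
    have hsqA : Real.sqrt (1 + (s * Real.sin θ) ^ 2) > 0 := Real.sqrt_pos.2 hA
    field_simp
    rw [hs]; ring
  rw [intervalIntegral.integral_congr (fun θ _ => key θ)]
  have hderiv : ∀ θ ∈ Set.uIcc (-(π / 2)) (π / 2),
      HasDerivAt (fun θ => Real.arsinh (s * Real.sin θ))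
        (s * Real.cos θ / Real.sqrt (1 + (s * Real.sin θ) ^ 2)) θ := by
    intro θ _
    have h1 : HasDerivAt (fun θ : ℝ => s * Real.sin θ) (s * Real.cos θ) θ :=
      (Real.hasDerivAt_sin θ).const_mul s
    have h2 := (Real.hasDerivAt_arsinh (s * Real.sin θ)).comp θ h1
    simpa [div_eq_mul_inv, mul_comm, Function.comp_def] using h2
  have hcont : Continuous fun θ => s * Real.cos θ / Real.sqrt (1 + (s * Real.sin θ) ^ 2) := by
    apply Continuous.div
    · exact continuous_const.mul Real.continuous_cos
    · exact (continuous_const.add (((continuous_const.mul Real.continuous_sin).pow 2))).sqrt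
    · intro θ
      have : (0:ℝ) < 1 + (s * Real.sin θ) ^ 2 := by positivity
      positivity
  rw [intervalIntegral.integral_eq_sub_of_hasDerivAt hderiv (hcont.intervalIntegrable _ _)]
  simp only [Real.sin_pi_div_two, Real.sin_neg, mul_neg, mul_one]
  rw [Real.arsinh_neg, sub_neg_eq_add, hs, Real.arsinh_sinh, hc]
  ring
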